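/- arXiv:2310.08905 — 2 statements merged into one kernel-verified Lean document; each statement's English description precedes it below -/
import Mathlib

section
/- Let v, w belong to the 4-dimensional Minkowski space (ℝ^{1,3}, ⟨·,·⟩) of signature (+,−,−,−), with v future-directed timelike (⟨v,v⟩ > 0, ⟨v,e_0⟩ > 0) and w spacelike nonzero (⟨w,w⟩ < 0). Let U = {u : ⟨u,u⟩ ≥ 1, ⟨u,e_0⟩ > 0}. Then the range of u ↦ ⟨v,u⟩ on U is [√⟨v,v⟩, +∞) and the range of u ↦ ⟨w,u⟩ on U is all of ℝ. -/
/-- Minkowski pseudoscalar product of signature (+,−,−,−) on ℝ⁴. -/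
def mink (x y : Fin 4 → ℝ) : ℝ :=
  x 0 * y 0 - x 1 * y 1 - x 2 * y 2 - x 3 * y 3

lemma mink_pos_aux (a0 a1 a2 a3 b0 b1 b2 b3 : ℝ)
    (ha : 0 < a0^2 - a1^2 - a2^2 - a3^2) (ha0 : 0 < a0)
    (hb : 0 < b0^2 - b1^2 - b2^2 - b3^2) (hb0 : 0 < b0) :
    0 < a0*b0 - a1*b1 - a2*b2 - a3*b3 := by
  nlinarith [sq_nonneg (a1*b2-a2*b1), sq_nonneg (a1*b3-a3*b1), sq_nonneg (a2*b3-a3*b2),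
    mul_pos ha0 hb0, mul_pos ha hb, sq_nonneg (a0*b0 - a1*b1 - a2*b2 - a3*b3),
    sq_nonneg (a0*b0 + a1*b1 + a2*b2 + a3*b3)]

lemma mink_revCS_aux (a0 a1 a2 a3 b0 b1 b2 b3 : ℝ)
    (ha : 0 < a0^2 - a1^2 - a2^2 - a3^2) :
    (a0^2 - a1^2 - a2^2 - a3^2) * (b0^2 - b1^2 - b2^2 - b3^2)
      ≤ (a0*b0 - a1*b1 - a2*b2 - a3*b3)^2 := by
  have hq : (a0^2 - a1^2 - a2^2 - a3^2)*b0^2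
      - 2*(a0*b0 - a1*b1 - a2*b2 - a3*b3)*(a0*b0)
      + (b0^2 - b1^2 - b2^2 - b3^2)*a0^2 ≤ 0 := by
    nlinarith [sq_nonneg (a0*b1-b0*a1), sq_nonneg (a0*b2-b0*a2), sq_nonneg (a0*b3-b0*a3)]
  nlinarith [mul_nonneg ha.le (neg_nonneg.mpr hq),
    sq_nonneg ((a0^2 - a1^2 - a2^2 - a3^2)*b0 - (a0*b0 - a1*b1 - a2*b2 - a3*b3)*a0)]

theorem stmt14 (v w : Fin 4 → ℝ)
    (hv : 0 < mink v v) (hv0 : 0 < v 0) (hw : mink w w < 0) :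
    ((fun u => mink v u) '' {u | 1 ≤ mink u u ∧ 0 < u 0} =
      Set.Ici (Real.sqrt (mink v v))) ∧
    ((fun u => mink w u) '' {u | 1 ≤ mink u u ∧ 0 < u 0} = Set.univ) := by
  constructor
  · apply Set.Subset.antisymm
    · rintro c ⟨u, ⟨hu1, hu0⟩, rfl⟩
      have hvv : 0 < v 0 ^ 2 - v 1 ^ 2 - v 2 ^ 2 - v 3 ^ 2 := by
        simpa [mink, sq] using hv
      have huu : 0 < u 0 ^ 2 - u 1 ^ 2 - u 2 ^ 2 - u 3 ^ 2 := by
        have : 0 < mink u u := lt_of_lt_of_le one_pos hu1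
        simpa [mink, sq] using this
      have hP : 0 < mink v u := by
        have := mink_pos_aux (v 0) (v 1) (v 2) (v 3) (u 0) (u 1) (u 2) (u 3)
          hvv hv0 huu hu0
        simpa [mink] using this
      have hCS : mink v v * mink u u ≤ (mink v u)^2 := by
        have := mink_revCS_aux (v 0) (v 1) (v 2) (v 3) (u 0) (u 1) (u 2) (u 3) hvv
        simpa [mink, sq] using this
      have h1 : mink v v ≤ (mink v u)^2 := by
        calc mink v v = mink v v * 1 := (mul_one _).symm
        _ ≤ mink v v * mink u u := by
            exact mul_le_mul_of_nonneg_left hu1 hv.le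
        _ ≤ (mink v u)^2 := hCS
      have := Real.sqrt_le_sqrt h1
      rwa [Real.sqrt_sq hP.le] at this
    · intro c hc
      have hsq : 0 < Real.sqrt (mink v v) := Real.sqrt_pos.mpr hv
      have hc0 : 0 < c := lt_of_lt_of_le hsq hc
      have hc2 : mink v v ≤ c^2 := by
        have h := pow_le_pow_left₀ (Real.sqrt_nonneg (mink v v)) hc 2
        rwa [Real.sq_sqrt hv.le] at h
      refine ⟨fun i => (c / mink v v) * v i, ⟨?_, ?_⟩, ?_⟩
      · have : mink (fun i => (c / mink v v) * v i) (fun i => (c / mink v v) * v i)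
            = (c / mink v v)^2 * mink v v := by simp [mink]; ring
        rw [this]
        rw [div_pow, div_mul_eq_mul_div, sq c]
        rw [le_div_iff₀ (by positivity)]
        calc 1 * (mink v v)^2 = mink v v * mink v v := by ring
        _ ≤ c^2 * mink v v := by nlinarith
        _ = c * c * mink v v := by ring
      · exact mul_pos (div_pos hc0 hv) hv0
      · show mink v (fun i => (c / mink v v) * v i) = c
        have : mink v (fun i => (c / mink v v) * v i) = (c / mink v v) * mink v v := by
          simp [mink]; ring
        rw [this, div_mul_cancel₀ _ hv.ne']
  · apply Set.eq_univ_of_forall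
    intro c
    set m : ℝ := w 1 ^ 2 + w 2 ^ 2 + w 3 ^ 2 with hm
    have hd : w 0 ^ 2 < m := by
      have : mink w w = w 0 ^2 - m := by simp [mink, hm]; ring
      nlinarith [hw, this]
    have hm0 : 0 < m := lt_of_le_of_lt (sq_nonneg _) hd
    set u0 : ℝ := max 1 ((2 * |w 0| * |c| + c^2 + m)/(m - w 0 ^2)) with hu0def
    have h1 : (1:ℝ) ≤ u0 := le_max_left _ _
    have h2' : (2 * |w 0| * |c| + c^2 + m)/(m - w 0 ^2) ≤ u0 := le_max_right _ _
    have h2 : 2 * |w 0| * |c| + c^2 + m ≤ u0 * (m - w 0 ^2) :=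
      (div_le_iff₀ (by linarith : (0:ℝ) < m - w 0 ^2)).mp h2'
    set t : ℝ := (w 0 * u0 - c)/m with ht
    refine ⟨fun i => if i = 0 then u0 else t * w i, ⟨?_, ?_⟩, ?_⟩
    · have heq : mink (fun i => if i = 0 then u0 else t * w i)
          (fun i => if i = 0 then u0 else t * w i) = u0^2 - t^2 * m := by
        simp [mink, hm]; ring
      rw [heq, ht]
      have habs : -(w 0 * c) ≤ |w 0| * |c| := by
        rw [← abs_mul]; exact neg_le_abs _
      have key : m + (w 0 * u0 - c)^2 ≤ m * u0^2 := by
        nlinarith [h1, h2, habs, mul_le_mul_of_nonneg_right h2 (by linarith : (0:ℝ) ≤ u0)]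
      have heq2 : ((w 0 * u0 - c)/m)^2 * m = (w 0 * u0 - c)^2 / m := by
        field_simp
      rw [heq2]
      have hdiv : (w 0 * u0 - c)^2 / m ≤ u0^2 - 1 := by
        rw [div_le_iff₀ hm0]; nlinarith [key]
      linarith
    · simpa using lt_of_lt_of_le one_pos h1
    · show mink w (fun i => if i = 0 then u0 else t * w i) = c
      have heq : mink w (fun i => if i = 0 then u0 else t * w i)
          = w 0 * u0 - t * m := by simp [mink, hm]; ring
      rw [heq, ht, div_mul_cancel₀ _ hm0.ne']
      ring
end

section
/- For a = α e_1 with α > 0 and b = α_4 e_4 + α_5 e_5 + α_6 e_6 with (α_4,α_5,α_6) ≠ 0 not collinear with (α,0,0), if x = y = 0 (where x + iy = (1/2)√(α² − β² + 2iαα_4), β = |(α_4,α_5,α_6)|), then the matrix exp(a+b)·exp(−b) is Hermitian if and only if tan(β/2) = β/2. -/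
open Matrix

noncomputable def e1 : Matrix (Fin 2) (Fin 2) ℂ := (2 : ℂ)⁻¹ • !![0, 1; 1, 0]
noncomputable def e2 : Matrix (Fin 2) (Fin 2) ℂ :=
  (2 : ℂ)⁻¹ • !![0, Complex.I; -Complex.I, 0]
noncomputable def e3 : Matrix (Fin 2) (Fin 2) ℂ := (2 : ℂ)⁻¹ • !![1, 0; 0, -1]
noncomputable def e4 : Matrix (Fin 2) (Fin 2) ℂ := Complex.I • e1
noncomputable def e5 : Matrix (Fin 2) (Fin 2) ℂ := Complex.I • e2
noncomputable def e6 : Matrix (Fin 2) (Fin 2) ℂ := Complex.I • e3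

section helpers

attribute [local instance] Matrix.linftyOpNormedRing Matrix.linftyOpNormedAlgebra

lemma exp_sq_zero (x : Matrix (Fin 2) (Fin 2) ℂ) (h : x * x = 0) :
    NormedSpace.exp x = 1 + x := by
  have hpow : ∀ n, 2 ≤ n → x ^ n = 0 := by
    intro n hn
    obtain ⟨m, rfl⟩ := Nat.exists_eq_add_of_le hn
    rw [pow_add, pow_two, h, zero_mul]
  rw [NormedSpace.exp_eq_tsum ℂ]
  show (∑' n : ℕ, ((n.factorial :ℂ))⁻¹ • x ^ n) = 1 + x
  rw [tsum_eq_sum (s := ({0, 1} : Finset ℕ)) ?_]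
  · norm_num
  · intro n hn
    simp only [Finset.mem_insert, Finset.mem_singleton] at hn
    rw [hpow n (by omega), smul_zero]

lemma exp_rot (u : Matrix (Fin 2) (Fin 2) ℂ) (hu : u * u = -1) (r : ℝ) :
    NormedSpace.exp (r • u) =
      algebraMap ℝ (Matrix (Fin 2) (Fin 2) ℂ) (Real.cos r) + (Real.sin r) • u := by
  let f := Complex.liftAux u hu
  have hc : Continuous f := f.toLinearMap.continuous_of_finiteDimensional
  have h1 : f ((r : ℂ) * Complex.I) = r • u := by
    simp [f, Complex.liftAux_apply]
  calc NormedSpace.exp (r • u) = NormedSpace.exp (r • u) := by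
        rfl
    _ = f (NormedSpace.exp ((r : ℂ) * Complex.I)) := by
        rw [NormedSpace.map_exp f hc, h1]
        rfl
    _ = f (Complex.exp ((r : ℂ) * Complex.I)) := by
        rw [Complex.exp_eq_exp_ℂ]
    _ = _ := by
        rw [Complex.liftAux_apply]
        simp

end helpers

set_option maxHeartbeats 1000000 in
theorem stmt15 (α α4 α5 α6 β : ℝ) (hα : 0 < α)
    (hβ : β = Real.sqrt (α4 ^ 2 + α5 ^ 2 + α6 ^ 2))
    (hne : ¬(α4 = 0 ∧ α5 = 0 ∧ α6 = 0))
    (hncol : ¬∃ a : ℝ, α4 = a * α ∧ α5 = 0 ∧ α6 = 0)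
    (hx : α ^ 2 = β ^ 2) (hy : α4 = 0)
    (a b : Matrix (Fin 2) (Fin 2) ℂ)
    (ha : a = (α : ℂ) • e1)
    (hb : b = (α4 : ℂ) • e4 + (α5 : ℂ) • e5 + (α6 : ℂ) • e6) :
    (NormedSpace.exp (a + b) * NormedSpace.exp (-b)).IsHermitian ↔
      Real.tan (β / 2) = β / 2 := by
  subst hy
  have hβ0 : 0 ≤ β := hβ ▸ Real.sqrt_nonneg _
  have hβ2 : α5 ^ 2 + α6 ^ 2 = β ^ 2 := by
    rw [hβ, Real.sq_sqrt (by positivity)]; ring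
  have hβpos : 0 < β := by nlinarith
  have hβC : ((β : ℂ)) ≠ 0 := by exact_mod_cast hβpos.ne'
  have hβ2C : (α5 : ℂ) ^ 2 + (α6 : ℂ) ^ 2 = (β : ℂ) ^ 2 := by exact_mod_cast hβ2
  have hαC : (α : ℂ) ^ 2 = (β : ℂ) ^ 2 := by exact_mod_cast hx
  set D : Matrix (Fin 2) (Fin 2) ℂ :=
    !![Complex.I * α6 / 2, ((α : ℂ) - α5) / 2; ((α : ℂ) + α5) / 2, -(Complex.I * α6) / 2] with hD
  set B : Matrix (Fin 2) (Fin 2) ℂ :=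
    !![Complex.I * α6, -(α5 : ℂ); (α5 : ℂ), -(Complex.I * α6)] with hBdef
  set u : Matrix (Fin 2) (Fin 2) ℂ := (β : ℂ)⁻¹ • B with hudef
  have hab : a + b = D := by
    subst ha hb
    ext i j
    fin_cases i <;> fin_cases j <;>
      simp only [e1, e2, e3, e4, e5, e6, hD, Matrix.add_apply, Matrix.smul_apply, smul_eq_mul,
        Matrix.mul_apply, Fin.sum_univ_two, Matrix.zero_apply, Fin.mk_zero, Fin.mk_one,
        Matrix.of_apply, Matrix.cons_val', Matrix.cons_val_zero, Matrix.cons_val_one,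
        Matrix.head_cons, Matrix.head_fin_const, Matrix.empty_val', Matrix.cons_val_fin_one] <;>
      push_cast
    · ring
    · linear_combination ((α5:ℂ)/2) * Complex.I_sq
    · linear_combination (-(α5:ℂ)/2) * Complex.I_sq
    · ring
  have hDsq : D * D = 0 := by
    ext i j
    fin_cases i <;> fin_cases j <;>
      simp only [hD, Matrix.mul_apply, Fin.sum_univ_two, Matrix.zero_apply, Fin.mk_zero, Fin.mk_one,
        Matrix.of_apply, Matrix.cons_val', Matrix.cons_val_zero, Matrix.cons_val_one,
        Matrix.head_cons, Matrix.head_fin_const, Matrix.empty_val', Matrix.cons_val_fin_one]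
    · linear_combination ((α6:ℂ)^2/4) * Complex.I_sq + (1/4) * hαC - (1/4) * hβ2C
    · ring
    · ring
    · linear_combination ((α6:ℂ)^2/4) * Complex.I_sq + (1/4) * hαC - (1/4) * hβ2C
  have hBB : B * B = (-((β:ℂ)^2)) • 1 := by
    ext i j
    fin_cases i <;> fin_cases j <;>
      simp only [hBdef, Matrix.smul_apply, Matrix.one_apply, smul_eq_mul,
        Matrix.mul_apply, Fin.sum_univ_two, Fin.mk_zero, Fin.mk_one,
        Matrix.of_apply, Matrix.cons_val', Matrix.cons_val_zero, Matrix.cons_val_one,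
        Matrix.head_cons, Matrix.head_fin_const, Matrix.empty_val', Matrix.cons_val_fin_one]
    · norm_num
      linear_combination ((α6:ℂ)^2) * Complex.I_sq - hβ2C
    · norm_num
      try ring
    · norm_num
      try ring
    · norm_num
      linear_combination ((α6:ℂ)^2) * Complex.I_sq - hβ2C
  have hu : u * u = -1 := by
    rw [hudef, smul_mul_smul_comm, hBB, smul_smul]
    have : (β:ℂ)⁻¹ * (β:ℂ)⁻¹ * (-((β:ℂ)^2)) = -1 := by
      field_simp
    rw [this, neg_smul, one_smul]
  have hbu : -b = (-(β / 2) : ℝ) • u := by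
    subst hb
    ext i j
    fin_cases i <;> fin_cases j <;>
      simp only [e1, e2, e3, e4, e5, e6, hudef, hBdef, Matrix.add_apply, Matrix.neg_apply,
        Matrix.smul_apply, smul_eq_mul, Complex.real_smul, Complex.ofReal_neg,
        Complex.ofReal_div, Complex.ofReal_ofNat,
        Matrix.mul_apply, Fin.sum_univ_two, Matrix.zero_apply, Fin.mk_zero, Fin.mk_one,
        Matrix.of_apply, Matrix.cons_val', Matrix.cons_val_zero, Matrix.cons_val_one,
        Matrix.head_cons, Matrix.head_fin_const, Matrix.empty_val', Matrix.cons_val_fin_one] <;>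
      · field_simp
        ring_nf <;> simp [Complex.I_sq]
  have h1 : NormedSpace.exp (a + b) = 1 + D := by rw [hab]; exact exp_sq_zero D hDsq
  have h2 : NormedSpace.exp (-b) =
      algebraMap ℝ (Matrix (Fin 2) (Fin 2) ℂ) (Real.cos (β / 2))
        - (Real.sin (β / 2)) • u := by
    rw [hbu, exp_rot u hu, Real.cos_neg, Real.sin_neg, neg_smul, sub_eq_add_neg]
  set t := Real.cos (β / 2) with ht
  set s := Real.sin (β / 2) with hs
  set g : ℝ := t - 2 * s / β with hg
  set E1 : Matrix (Fin 2) (Fin 2) ℂ :=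
    !![1 + Complex.I * α6 / 2, ((α : ℂ) - α5) / 2;
       ((α : ℂ) + α5) / 2, 1 + -(Complex.I * α6) / 2] with hE1
  set E2 : Matrix (Fin 2) (Fin 2) ℂ :=
    !![(t : ℂ) - (s : ℂ) * Complex.I * α6 / β, (s : ℂ) * α5 / β;
       -((s : ℂ) * α5 / β), (t : ℂ) + (s : ℂ) * Complex.I * α6 / β] with hE2
  have h1' : 1 + D = E1 := by
    ext i j
    fin_cases i <;> fin_cases j <;>
      simp [hD, hE1, Matrix.add_apply, Matrix.one_apply, Matrix.mul_apply, Fin.sum_univ_two]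
  have h2' : algebraMap ℝ (Matrix (Fin 2) (Fin 2) ℂ) t - (s : ℝ) • u = E2 := by
    ext i j
    fin_cases i <;> fin_cases j <;>
      (simp [hudef, hBdef, hE2, Matrix.sub_apply, Matrix.smul_apply,
        Matrix.algebraMap_matrix_apply, Complex.real_smul]
       try field_simp
       try ring)
  rw [h1, h2, h1', h2']
  set M : Matrix (Fin 2) (Fin 2) ℂ := E1 * E2 with hM
  have key : M - Mᴴ = (g : ℝ) • B := by
    ext i j
    fin_cases i <;> fin_cases j <;>
      · simp only [hM, hE1, hE2, hBdef, Matrix.sub_apply, Matrix.conjTranspose_apply,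
          Matrix.smul_apply, Matrix.mul_apply, Fin.sum_univ_two, Complex.real_smul,
          Fin.mk_zero, Fin.mk_one, Matrix.of_apply, Matrix.cons_val', Matrix.cons_val_zero,
          Matrix.cons_val_one, Matrix.head_cons, Matrix.head_fin_const, Matrix.empty_val',
          Matrix.cons_val_fin_one, _root_.map_add, _root_.map_sub, _root_.map_mul,
          map_div₀, map_inv₀, _root_.map_neg, _root_.map_one, _root_.map_ofNat,
          Complex.conj_ofReal, Complex.conj_I, Complex.star_def]
        rw [hg]
        push_cast
        field_simp
        ring
  have hherm : M.IsHermitian ↔ g = 0 := by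
    constructor
    · intro h
      have h0 : ((g : ℝ) • B : Matrix (Fin 2) (Fin 2) ℂ) = 0 := by
        rw [← key, h.eq, sub_self]
      by_contra hgne
      have hBne : B = 0 := by
        rcases smul_eq_zero.mp h0 with h' | h'
        · exact absurd h' hgne
        · exact h'
      have h01 := congrFun (congrFun hBne 0) 1
      have h00 := congrFun (congrFun hBne 0) 0
      simp [hBdef] at h01 h00
      exact hne ⟨rfl, h01, by simpa [Complex.ext_iff] using h00⟩
    · intro h
      have h0 : M - Mᴴ = 0 := by rw [key, h]; simp
      exact (sub_eq_zero.mp h0).symm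
  rw [hherm]
  constructor
  · intro h
    have htne : t ≠ 0 := by
      intro ht0
      have hs0 : s = 0 := by
        rw [hg, ht0] at h
        field_simp at h
        linarith
      have := Real.sin_sq_add_cos_sq (β / 2)
      rw [← hs, ← ht, hs0, ht0] at this
      norm_num at this
    rw [Real.tan_eq_sin_div_cos, ← hs, ← ht]
    rw [hg] at h
    field_simp at h ⊢
    nlinarith [h]
  · intro h
    have htne : t ≠ 0 := by
      intro ht0
      rw [Real.tan_eq_sin_div_cos, ← hs, ← ht, ht0, div_zero] at h
      nlinarith [h]
    rw [Real.tan_eq_sin_div_cos, ← hs, ← ht] at h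
    rw [hg]
    field_simp at h ⊢
    nlinarith [h]
end
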